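/- Let n ≥ 1 and k_1, …, k_n ≥ 1 be integers, and suppose s ∈ [1, ∞) satisfies n − s = Σ_{l=1}^n 1/(1 + (s−1) + … + (s−1)^{k_l}). Define a_j^{(l)} = (s−1)^j / (1 + (s−1) + … + (s−1)^{k_l}) for j = 1, …, k_l and l = 1, …, n, and let ω(χ) = Σ_{l=1}^n Σ_{j=1}^{k_l} a_j^{(l)} α_j^{(l)} for a character χ = (α_j^{(l)}). Then ω is TS-invariant: for every character χ, setting λ = ω(χ), λ̃ = Σ_{l=1}^n α_{k_l}^{(l)} − λ, and χ̃ with entries χ̃_j^{(l)} = λ̃ − α_{k_l}^{(l)} + α_{j−1}^{(l)} (where α_0^{(l)} = 0), one has ω(χ̃) = λ̃. -/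

import Mathlib

theorem stmt_13 (n : ℕ) (hn : 1 ≤ n) (k : Fin n → ℕ) (hk : ∀ l, 1 ≤ k l)
    (s : ℝ) (hs : 1 ≤ s)
    (heq : (n : ℝ) - s = ∑ l, (∑ j ∈ Finset.range (k l + 1), (s - 1) ^ j)⁻¹)
    (a : Fin n → ℕ → ℝ)
    (ha : ∀ l, ∀ j ∈ Finset.Icc 1 (k l),
      a l j = (s - 1) ^ j / ∑ i ∈ Finset.range (k l + 1), (s - 1) ^ i)
    -- `α` is a character: `α l 0 = 0` by convention and
    -- `0 = α l 0 < α l 1 < … < α l (k l)`.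
    (α : Fin n → ℕ → ℝ) (hα0 : ∀ l, α l 0 = 0)
    (hαmono : ∀ l, ∀ j < k l, α l j < α l (j + 1))
    (lam lam' : ℝ)
    (hlam : lam = ∑ l, ∑ j ∈ Finset.Icc 1 (k l), a l j * α l j)
    (hlam' : lam' = (∑ l, α l (k l)) - lam) :
    ∑ l, ∑ j ∈ Finset.Icc 1 (k l), a l j * (lam' - α l (k l) + α l (j - 1)) = lam' := by
  have hs1 : 0 ≤ s - 1 := by linarith
  set S : Fin n → ℝ := fun l => ∑ i ∈ Finset.range (k l + 1), (s - 1) ^ i with hSdef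
  have hSval : ∀ l, S l = ∑ i ∈ Finset.range (k l + 1), (s - 1) ^ i := fun l => rfl
  have hSpos : ∀ l, 0 < S l := by
    intro l
    have h1 : S l = (∑ i ∈ Finset.range (k l), (s - 1) ^ (i + 1)) + 1 := by
      rw [hSval, Finset.sum_range_succ']
      simp
    have h2 : 0 ≤ ∑ i ∈ Finset.range (k l), (s - 1) ^ (i + 1) :=
      Finset.sum_nonneg fun i _ => pow_nonneg hs1 _
    linarith
  have hSne : ∀ l, S l ≠ 0 := fun l => ne_of_gt (hSpos l)
  have key : ∀ l, ∑ j ∈ Finset.Icc 1 (k l), a l j * (lam' - α l (k l) + α l (j - 1))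
      = (1 - (S l)⁻¹) * lam'
        + (s - 1) * (∑ j ∈ Finset.Icc 1 (k l), a l j * α l j)
        - (s - 1) * α l (k l) := by
    intro l
    set K := k l with hKdef
    set A := α l K with hAdef
    set B := ∑ j ∈ Finset.Icc 1 K, (s - 1) ^ j * α l j with hBdef
    -- generic shift identity
    have hshift : ∀ f : ℕ → ℝ,
        ∑ i ∈ Finset.range K, f (i + 1) = (∑ i ∈ Finset.range K, f i) + f K - f 0 := by
      intro f
      have e1 := Finset.sum_range_succ' f K
      have e2 := Finset.sum_range_succ f K
      linarith [e1, e2.symm.trans e1]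
    -- h1 : sum of powers over Icc
    have h1 : ∑ j ∈ Finset.Icc 1 K, (s - 1) ^ j = S l - 1 := by
      rw [← Finset.Ico_add_one_right_eq_Icc, Finset.sum_Ico_eq_sum_range, Nat.add_sub_cancel]
      have := hshift (fun j => (s - 1) ^ j)
      simp only [pow_zero] at this
      have hS : S l = (∑ i ∈ Finset.range K, (s - 1) ^ i) + (s - 1) ^ K := by
        rw [hSval, Finset.sum_range_succ]
      calc ∑ i ∈ Finset.range K, (s - 1) ^ (1 + i)
          = ∑ i ∈ Finset.range K, (s - 1) ^ (i + 1) := by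
            exact Finset.sum_congr rfl fun i _ => by rw [add_comm]
        _ = S l - 1 := by rw [this]; linarith
    -- h2 : shifted alpha sum
    have h2 : ∑ j ∈ Finset.Icc 1 K, (s - 1) ^ j * α l (j - 1)
        = (s - 1) * B - (s - 1) ^ (K + 1) * A := by
      rw [← Finset.Ico_add_one_right_eq_Icc, Finset.sum_Ico_eq_sum_range, Nat.add_sub_cancel]
      have e : ∀ i ∈ Finset.range K, (s - 1) ^ (1 + i) * α l (1 + i - 1)
          = (fun j => (s - 1) ^ (j + 1) * α l j) i := by
        intro i _
        simp [add_comm 1 i]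
      rw [Finset.sum_congr rfl e]
      have hB' : B = (∑ i ∈ Finset.range K, (s - 1) ^ i * α l i) + (s - 1) ^ K * A := by
        rw [hBdef, ← Finset.Ico_add_one_right_eq_Icc, Finset.sum_Ico_eq_sum_range, Nat.add_sub_cancel]
        have := hshift (fun j => (s - 1) ^ j * α l j)
        simp only [pow_zero, one_mul, hα0 l] at this
        calc ∑ i ∈ Finset.range K, (s - 1) ^ (1 + i) * α l (1 + i)
            = ∑ i ∈ Finset.range K, (s - 1) ^ (i + 1) * α l (i + 1) := by
              exact Finset.sum_congr rfl fun i _ => by rw [add_comm]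
          _ = _ := by rw [this]; ring
      have factor : ∑ i ∈ Finset.range K, (s - 1) ^ (i + 1) * α l i
          = (s - 1) * ∑ i ∈ Finset.range K, (s - 1) ^ i * α l i := by
        rw [Finset.mul_sum]
        exact Finset.sum_congr rfl fun i _ => by ring
      rw [factor]
      have : (∑ i ∈ Finset.range K, (s - 1) ^ i * α l i) = B - (s - 1) ^ K * A := by
        linarith [hB']
      rw [this]
      ring
    -- h4 : top power in terms of S
    have h4 : (s - 1) ^ (K + 1) = (s - 1) * S l - S l + 1 := by
      have e1 : (s - 1) * S l = ∑ i ∈ Finset.range (K + 1), (s - 1) ^ (i + 1) := by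
        rw [hSval, Finset.mul_sum]
        exact Finset.sum_congr rfl fun i _ => by ring
      have e2 := Finset.sum_range_succ' (fun j => (s - 1) ^ j) (K + 1)
      have e3 := Finset.sum_range_succ (fun j => (s - 1) ^ j) (K + 1)
      simp only [pow_zero] at e2 e3
      have hS : S l = ∑ i ∈ Finset.range (K + 1), (s - 1) ^ i := hSval l
      rw [e1]
      linarith [e2, e3]
    -- rewrite a in the sums
    have ea : ∑ j ∈ Finset.Icc 1 K, a l j * (lam' - A + α l (j - 1))
        = ((S l - 1) * (lam' - A) + ((s - 1) * B - (s - 1) ^ (K + 1) * A)) / S l := by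
      rw [← h1, ← h2, Finset.sum_mul, ← Finset.sum_add_distrib, Finset.sum_div]
      refine Finset.sum_congr rfl fun j hj => ?_
      rw [ha l j hj]
      field_simp
      ring
    have eb : ∑ j ∈ Finset.Icc 1 K, a l j * α l j = B / S l := by
      rw [hBdef, Finset.sum_div]
      refine Finset.sum_congr rfl fun j hj => ?_
      rw [ha l j hj]
      ring
    rw [ea, eb, h4]
    field_simp [hSne l]
    ring
  rw [Finset.sum_congr rfl fun l _ => key l]
  have hu : ∑ l, (S l)⁻¹ = (n : ℝ) - s := heq.symm
  have hA : ∑ l, α l (k l) = lam' + lam := by linarith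
  rw [Finset.sum_sub_distrib, Finset.sum_add_distrib, ← Finset.sum_mul, ← Finset.mul_sum,
    ← Finset.mul_sum, Finset.sum_sub_distrib, Finset.sum_const, Finset.card_univ,
    Fintype.card_fin, hu, ← hlam, hA]
  push_cast
  ring
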